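/- Let Ω ⊂ ℝ² be a bounded measurable set, α, β : Ω → ℝ bounded measurable real-valued functions, k ∈ ℝ² fixed, and i ∈ {1, 2} with eᵢ the corresponding standard basis vector. Define, for continuously differentiable square-integrable u, v with square-integrable gradients, a_κ(u, v) = ∫_Ω α ((∇+iκ)u)·conj((∇+iκ)v) dx, b(u, v) = ∫_Ω β u conj(v) dx, m_α(u, v) = ∫_Ω α u conj(v) dx, and m_{αi}(u, v) = ∫_Ω i α ( u ∂ᵢconj(v) − conj(v) ∂ᵢu ) dx. Suppose: (1) t ↦ u_t is a family of such functions defined for t in a neighborhood of 0, differentiable at t = 0 with derivative w, such that t ↦ a_{k+teᵢ}(u_t, u_t) and t ↦ b(u_t, u_t) are differentiable at 0 with derivatives given by the Leibniz rule (differentiation under the integral sign is valid); (2) λ : ℝ → ℝ is differentiable at 0 and for each t near 0, a_{k+teᵢ}(u_t, v) = λ(t) b(u_t, v) holds for v = u_t and, at t = 0, also for v = w; (3) b(u_t, u_t) = 1 for all t near 0. Then λ'(0) = 2k_i m_α(u₀, u₀) + m_{αi}(u₀, u₀). -/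

import Mathlib

open MeasureTheory

/-- Partial derivative in the `i`-th coordinate of a complex-valued function on `ℝ²`. -/
noncomputable def pd2 (i : Fin 2) (f : (Fin 2 → ℝ) → ℂ) (x : Fin 2 → ℝ) : ℂ :=
  fderiv ℝ f x (Pi.single i 1)

/-- The sesquilinear form `a_κ(u,v) = ∫_Ω α ((∇+iκ)u)·conj((∇+iκ)v) dx`. -/
noncomputable def formA (Ω : Set (Fin 2 → ℝ)) (α : (Fin 2 → ℝ) → ℝ) (κ : Fin 2 → ℝ)
    (u v : (Fin 2 → ℝ) → ℂ) : ℂ :=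
  ∫ x in Ω, (α x : ℂ) * ∑ j : Fin 2,
    (pd2 j u x + Complex.I * (κ j : ℂ) * u x) *
      (starRingEnd ℂ) (pd2 j v x + Complex.I * (κ j : ℂ) * v x)

/-- The sesquilinear form `b(u,v) = ∫_Ω β u conj(v) dx`. -/
noncomputable def formB (Ω : Set (Fin 2 → ℝ)) (β : (Fin 2 → ℝ) → ℝ)
    (u v : (Fin 2 → ℝ) → ℂ) : ℂ :=
  ∫ x in Ω, (β x : ℂ) * u x * (starRingEnd ℂ) (v x)

/-- The form `m_α(u,v) = ∫_Ω α u conj(v) dx`. -/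
noncomputable def formMa (Ω : Set (Fin 2 → ℝ)) (α : (Fin 2 → ℝ) → ℝ)
    (u v : (Fin 2 → ℝ) → ℂ) : ℂ :=
  ∫ x in Ω, (α x : ℂ) * u x * (starRingEnd ℂ) (v x)

/-- The form `m_{αi}(u,v) = ∫_Ω iα (u ∂ᵢconj(v) − conj(v) ∂ᵢu) dx`. -/
noncomputable def formMai (Ω : Set (Fin 2 → ℝ)) (α : (Fin 2 → ℝ) → ℝ) (i : Fin 2)
    (u v : (Fin 2 → ℝ) → ℂ) : ℂ :=
  ∫ x in Ω, Complex.I * (α x : ℂ) *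
    (u x * pd2 i (fun y => (starRingEnd ℂ) (v y)) x
      - (starRingEnd ℂ) (v x) * pd2 i u x)


lemma formA_conj (Ω : Set (Fin 2 → ℝ)) (α : (Fin 2 → ℝ) → ℝ) (κ : Fin 2 → ℝ)
    (u v : (Fin 2 → ℝ) → ℂ) :
    (starRingEnd ℂ) (formA Ω α κ u v) = formA Ω α κ v u := by
  unfold formA
  rw [← integral_conj]
  refine integral_congr_ae (Filter.Eventually.of_forall fun x => ?_)
  simp only [map_mul, map_sum, Complex.conj_ofReal, RingHomCompTriple.comp_apply,
    RingHom.id_apply, Complex.conj_conj]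
  congr 1
  refine Finset.sum_congr rfl fun j _ => ?_
  ring

lemma formB_conj (Ω : Set (Fin 2 → ℝ)) (β : (Fin 2 → ℝ) → ℝ)
    (u v : (Fin 2 → ℝ) → ℂ) :
    (starRingEnd ℂ) (formB Ω β u v) = formB Ω β v u := by
  unfold formB
  rw [← integral_conj]
  refine integral_congr_ae (Filter.Eventually.of_forall fun x => ?_)
  simp only [map_mul, Complex.conj_ofReal, Complex.conj_conj]
  ring

/-- First-derivative formula for a normalized eigenvalue branch of the Bloch
eigenvalue problem: `λ'(0) = 2kᵢ m_α(u₀,u₀) + m_{αi}(u₀,u₀)`. -/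
theorem band_function_derivative_formula
    (Ω : Set (Fin 2 → ℝ)) (hΩm : MeasurableSet Ω) (hΩb : Bornology.IsBounded Ω)
    (α β : (Fin 2 → ℝ) → ℝ) (hαm : Measurable α) (hβm : Measurable β)
    (hαb : ∃ Cα, ∀ x, |α x| ≤ Cα) (hβb : ∃ Cβ, ∀ x, |β x| ≤ Cβ)
    (k : Fin 2 → ℝ) (i : Fin 2)
    (u : ℝ → (Fin 2 → ℝ) → ℂ) (w : (Fin 2 → ℝ) → ℂ) (lam : ℝ → ℝ) (lam' : ℝ)
    -- the family consists of admissible functions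
    (husmooth : ∀ᶠ t in nhds (0 : ℝ), ContDiff ℝ 1 (u t))
    (hu2 : ∀ᶠ t in nhds (0 : ℝ), MemLp (u t) 2 (volume.restrict Ω) ∧
      ∀ j : Fin 2, MemLp (fun x => pd2 j (u t) x) 2 (volume.restrict Ω))
    (hwsmooth : ContDiff ℝ 1 w)
    (hw2 : MemLp w 2 (volume.restrict Ω) ∧
      ∀ j : Fin 2, MemLp (fun x => pd2 j w x) 2 (volume.restrict Ω))
    -- (1) differentiability of the family at `t = 0` with derivative `w`, and
    -- differentiability of the quadratic forms with Leibniz-rule derivatives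
    (hderiv : ∀ x, HasDerivAt (fun t => u t x) (w x) 0)
    (hA' : HasDerivAt
      (fun t => formA Ω α (k + t • (Pi.single i 1 : Fin 2 → ℝ)) (u t) (u t))
      (formA Ω α k w (u 0) + formA Ω α k (u 0) w
        + 2 * (k i : ℂ) * formMa Ω α (u 0) (u 0) + formMai Ω α i (u 0) (u 0)) 0)
    (hB' : HasDerivAt (fun t => formB Ω β (u t) (u t))
      (formB Ω β w (u 0) + formB Ω β (u 0) w) 0)
    -- (2) eigenvalue relation
    (hlam : HasDerivAt lam lam' 0)
    (heig : ∀ᶠ t in nhds (0 : ℝ),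
      formA Ω α (k + t • (Pi.single i 1 : Fin 2 → ℝ)) (u t) (u t)
        = (lam t : ℂ) * formB Ω β (u t) (u t))
    (heig0 : formA Ω α k (u 0) w = (lam 0 : ℂ) * formB Ω β (u 0) w)
    -- (3) normalization
    (hnorm : ∀ᶠ t in nhds (0 : ℝ), formB Ω β (u t) (u t) = 1) :
    (lam' : ℂ) = 2 * (k i : ℂ) * formMa Ω α (u 0) (u 0) + formMai Ω α i (u 0) (u 0) := by
  -- B'(0) = 0 from the normalization
  have hBconst : HasDerivAt (fun t => formB Ω β (u t) (u t)) 0 0 :=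
    (hasDerivAt_const (0:ℝ) (1:ℂ)).congr_of_eventuallyEq hnorm
  have hBzero : formB Ω β w (u 0) + formB Ω β (u 0) w = 0 := hB'.unique hBconst
  -- A(t) = lam t eventually
  have hAeq : (fun t => formA Ω α (k + t • (Pi.single i 1 : Fin 2 → ℝ)) (u t) (u t))
      =ᶠ[nhds (0:ℝ)] fun t => (lam t : ℂ) := by
    filter_upwards [heig, hnorm] with t h1 h2
    rw [h1, h2, mul_one]
  have hlamC : HasDerivAt (fun t => (lam t : ℂ)) (lam' : ℂ) 0 := by
    exact hlam.ofReal_comp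
  have hA2 : HasDerivAt
      (fun t => formA Ω α (k + t • (Pi.single i 1 : Fin 2 → ℝ)) (u t) (u t))
      (lam' : ℂ) 0 := hlamC.congr_of_eventuallyEq hAeq
  have key := hA'.unique hA2
  -- formA w u0 = lam 0 * formB w u0
  have hconj : formA Ω α k w (u 0) = (lam 0 : ℂ) * formB Ω β w (u 0) := by
    rw [← formA_conj, heig0, map_mul, formB_conj, Complex.conj_ofReal]
  rw [hconj, heig0] at key
  have : (lam 0 : ℂ) * (formB Ω β w (u 0) + formB Ω β (u 0) w)
      + 2 * (k i : ℂ) * formMa Ω α (u 0) (u 0) + formMai Ω α i (u 0) (u 0) = (lam' : ℂ) := by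
    rw [← key]; ring
  rw [hBzero, mul_zero, zero_add] at this
  exact this.symm
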